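/- Let H be a real Hilbert space and f : H → ℝ Lipschitz with constant K. For ε > 0 define the inf-convolution f_ε(x) = inf_{y∈H} [ f(y) + ‖x−y‖²/(2ε) ]. Then: (i) f_ε is real-valued and Lipschitz with constant K; (ii) 0 ≤ f(x) − f_ε(x) ≤ K²ε/2 for all x, so f_ε → f uniformly as ε → 0; (iii) x ↦ f_ε(x) − ‖x‖²/(2ε) is concave (f_ε is semiconcave); (iv) if moreover there is C ≥ 0 such that x ↦ f(x) + C‖x‖² is convex, then there exist ε₀ > 0 and C′ ≥ 0 such that for all 0 < ε ≤ ε₀ the function x ↦ f_ε(x) + C′‖x‖² is convex (semiconvexity with constant independent of ε). -/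

import Mathlib

open Set

noncomputable section

lemma comb_sq {H : Type*} [NormedAddCommGroup H] [InnerProductSpace ℝ H]
    (a b : ℝ) (hab : a + b = 1) (u v : H) :
    ‖a • u + b • v‖ ^ 2 = a * ‖u‖ ^ 2 + b * ‖v‖ ^ 2 - a * b * ‖u - v‖ ^ 2 := by
  have h1 : ‖a • u + b • v‖ ^ 2
      = a^2*‖u‖^2 + 2*a*b*(inner ℝ u v : ℝ) + b^2*‖v‖^2 := by
    rw [← real_inner_self_eq_norm_sq]
    simp only [inner_add_add_self, real_inner_smul_left, real_inner_smul_right,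
      real_inner_self_eq_norm_sq, norm_smul, mul_pow, sq_abs, Real.norm_eq_abs]
    rw [real_inner_comm v u]
    ring
  have h2 : ‖u - v‖^2 = ‖u‖^2 - 2*(inner ℝ u v : ℝ) + ‖v‖^2 := norm_sub_sq_real u v
  rw [h1, h2]
  linear_combination (a*‖u‖^2 + b*‖v‖^2) * hab

lemma psd_vec {H : Type*} [NormedAddCommGroup H] [InnerProductSpace ℝ H]
    (ε C : ℝ) (hε : 0 < ε) (hC : 0 ≤ C) (hε₀ : ε ≤ 1/(4*C+1)) (p q : H) :
    C * ‖q‖^2 ≤ ‖p - q‖^2/(2*ε) + 2*C*‖p‖^2 := by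
  have h2 : ‖p - q‖^2 = ‖p‖^2 - 2*(inner ℝ p q : ℝ) + ‖q‖^2 := norm_sub_sq_real p q
  have h3 := real_inner_le_norm p q
  have h4 : ε * (4*C+1) ≤ 1 := by
    rw [le_div_iff₀ (by positivity)] at hε₀; linarith
  have h5 : (0:ℝ) ≤ ‖p‖ := norm_nonneg p
  have h6 : (0:ℝ) ≤ ‖q‖ := norm_nonneg q
  have h2ε : (0:ℝ) < 2*ε := by positivity
  rw [h2, ← sub_le_iff_le_add, le_div_iff₀ h2ε]
  nlinarith [sq_nonneg ((1+4*C*ε)*‖p‖ - ‖q‖), sq_nonneg ‖q‖, mul_nonneg hC hε.le,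
    sq_nonneg (‖p‖-‖q‖), mul_nonneg (mul_nonneg hC hε.le) h5, mul_nonneg (mul_nonneg hC hε.le) h6,
    mul_nonneg (mul_nonneg (mul_nonneg hC hε.le) (sq_nonneg ‖q‖)) (by nlinarith : (0:ℝ) ≤ 1 - 4*C*ε)]


/-- The inf-convolution `f_ε(x) = inf_{y∈H} [ f(y) + ‖x-y‖²/(2ε) ]`. -/
def infConv {H : Type*} [NormedAddCommGroup H] (f : H → ℝ) (ε : ℝ) (x : H) : ℝ :=
  sInf {v | ∃ y : H, v = f y + ‖x - y‖ ^ 2 / (2 * ε)}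

/-- **Properties of inf-convolutions** (Lemma 4.1 (i)–(iii) and Lasry–Lions regularization).
For `f : H → ℝ` `K`-Lipschitz on a real Hilbert space and `ε > 0`:
(i) `f_ε` is real-valued (the infimum is finite) and `K`-Lipschitz;
(ii) `0 ≤ f - f_ε ≤ K²ε/2`, so `f_ε → f` uniformly;
(iii) `f_ε - ‖·‖²/(2ε)` is concave;
(iv) if `f + C‖·‖²` is convex for some `C ≥ 0`, then there are `ε₀ > 0` and `C' ≥ 0`
such that `f_ε + C'‖·‖²` is convex for all `0 < ε ≤ ε₀`. -/
theorem infConv_properties {H : Type*} [NormedAddCommGroup H] [InnerProductSpace ℝ H]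
    [CompleteSpace H] (f : H → ℝ) (K : ℝ) (hK : 0 ≤ K)
    (hf : ∀ x y : H, |f x - f y| ≤ K * ‖x - y‖) :
    (∀ ε : ℝ, 0 < ε → ∀ x : H, BddBelow {v | ∃ y : H, v = f y + ‖x - y‖ ^ 2 / (2 * ε)}) ∧
    (∀ ε : ℝ, 0 < ε → ∀ x y : H, |infConv f ε x - infConv f ε y| ≤ K * ‖x - y‖) ∧
    (∀ ε : ℝ, 0 < ε → ∀ x : H,
      0 ≤ f x - infConv f ε x ∧ f x - infConv f ε x ≤ K ^ 2 * ε / 2) ∧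
    (∀ ε : ℝ, 0 < ε →
      ConcaveOn ℝ univ fun x => infConv f ε x - ‖x‖ ^ 2 / (2 * ε)) ∧
    (∀ C : ℝ, 0 ≤ C → ConvexOn ℝ univ (fun x => f x + C * ‖x‖ ^ 2) →
      ∃ ε₀ > (0 : ℝ), ∃ C' ≥ (0 : ℝ), ∀ ε : ℝ, 0 < ε → ε ≤ ε₀ →
        ConvexOn ℝ univ fun x => infConv f ε x + C' * ‖x‖ ^ 2) := by
  -- basic facts
  have hne : ∀ (ε : ℝ) (x : H),
      Set.Nonempty {v | ∃ y : H, v = f y + ‖x - y‖ ^ 2 / (2 * ε)} :=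
    fun ε x => ⟨f x + ‖x - x‖ ^ 2 / (2 * ε), x, rfl⟩
  have hlb : ∀ ε : ℝ, 0 < ε → ∀ x y : H,
      f x - K ^ 2 * ε / 2 ≤ f y + ‖x - y‖ ^ 2 / (2 * ε) := by
    intro ε hε x y
    have h1 : f x - f y ≤ K * ‖x - y‖ := (abs_le.mp (hf x y)).2
    have h2 : (0:ℝ) ≤ ‖x - y‖ := norm_nonneg _
    have h3 : (0:ℝ) ≤ (‖x - y‖ - K*ε)^2 := sq_nonneg _
    have h4 : K * ‖x-y‖ - K^2*ε/2 ≤ ‖x - y‖^2/(2*ε) := by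
      rw [le_div_iff₀ (by positivity)]; nlinarith
    linarith
  have hbdd : ∀ ε : ℝ, 0 < ε → ∀ x : H,
      BddBelow {v | ∃ y : H, v = f y + ‖x - y‖ ^ 2 / (2 * ε)} := by
    intro ε hε x
    exact ⟨f x - K ^ 2 * ε / 2, fun v ⟨y, hy⟩ => hy ▸ hlb ε hε x y⟩
  have hle : ∀ ε : ℝ, 0 < ε → ∀ x y : H,
      infConv f ε x ≤ f y + ‖x - y‖ ^ 2 / (2 * ε) :=
    fun ε hε x y => csInf_le (hbdd ε hε x) ⟨y, rfl⟩
  have hge : ∀ ε : ℝ, 0 < ε → ∀ x : H, f x - K ^ 2 * ε / 2 ≤ infConv f ε x :=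
    fun ε hε x => le_csInf (hne ε x) (fun v ⟨y, hy⟩ => hy ▸ hlb ε hε x y)
  have happrox : ∀ ε : ℝ, 0 < ε → ∀ x : H, ∀ δ : ℝ, 0 < δ →
      ∃ y : H, f y + ‖x - y‖ ^ 2 / (2 * ε) < infConv f ε x + δ := by
    intro ε hε x δ hδ
    have : infConv f ε x < infConv f ε x + δ := by linarith
    obtain ⟨v, ⟨y, rfl⟩, hv⟩ := exists_lt_of_csInf_lt (hne ε x) this
    exact ⟨y, hv⟩
  refine ⟨hbdd, ?_, ?_, ?_, ?_⟩
  · -- (ii) Lipschitz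
    intro ε hε x z
    have key : ∀ x z : H, infConv f ε x - infConv f ε z ≤ K * ‖x - z‖ := by
      intro x z
      rw [sub_le_iff_le_add]
      refine le_of_forall_pos_le_add fun δ hδ => ?_
      obtain ⟨y, hy⟩ := happrox ε hε z δ hδ
      have h1 : infConv f ε x ≤ f (y + x - z) + ‖x - (y + x - z)‖ ^ 2 / (2 * ε) :=
        hle ε hε x _
      have e1 : x - (y + x - z) = z - y := by abel
      have h2 : f (y + x - z) - f y ≤ K * ‖(y + x - z) - y‖ := (abs_le.mp (hf _ y)).2
      have e2 : (y + x - z) - y = x - z := by abel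
      rw [e1] at h1
      rw [e2] at h2
      linarith
    rw [abs_sub_le_iff]
    exact ⟨key x z, by rw [norm_sub_rev] at *; exact key z x⟩
  · -- (iii)
    intro ε hε x
    constructor
    · have := hle ε hε x x
      simp only [sub_self, norm_zero] at this
      have : infConv f ε x ≤ f x := by
        simpa using this
      linarith
    · have := hge ε hε x
      linarith
  · -- (iv) concavity
    intro ε hε
    refine ⟨convex_univ, fun x _ z _ a b ha hb hab => ?_⟩
    simp only [smul_eq_mul]
    rw [← sub_nonneg]
    have hw : ∀ v ∈ {v | ∃ y : H, v = f y + ‖(a • x + b • z) - y‖ ^ 2 / (2 * ε)},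
        a * (infConv f ε x - ‖x‖^2/(2*ε)) + b * (infConv f ε z - ‖z‖^2/(2*ε))
          + ‖a • x + b • z‖^2/(2*ε) ≤ v := by
      rintro v ⟨y, rfl⟩
      have e1 : a • x + b • z - y = a • (x - y) + b • (z - y) := by
        have hb1 : b = 1 - a := by linarith
        rw [hb1]; module
      have e2 : (x - y) - (z - y) = x - z := by abel
      have c1 : ‖a • x + b • z - y‖^2
          = a * ‖x - y‖^2 + b * ‖z - y‖^2 - a*b*‖x - z‖^2 := by
        rw [e1, comb_sq a b hab, e2]
      have c2 : ‖a • x + b • z‖^2 = a * ‖x‖^2 + b * ‖z‖^2 - a*b*‖x - z‖^2 :=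
        comb_sq a b hab x z
      have h1 : a * infConv f ε x ≤ a * (f y + ‖x - y‖^2/(2*ε)) :=
        mul_le_mul_of_nonneg_left (hle ε hε x y) ha
      have h2 : b * infConv f ε z ≤ b * (f y + ‖z - y‖^2/(2*ε)) :=
        mul_le_mul_of_nonneg_left (hle ε hε z y) hb
      have h3 : a * f y + b * f y = f y := by rw [← add_mul, hab, one_mul]
      have h2ε : (0:ℝ) < 2*ε := by positivity
      rw [c1, c2]
      ring_nf at h1 h2 h3 ⊢
      linarith [h1, h2, h3]
    have h0 : a * (infConv f ε x - ‖x‖^2/(2*ε)) + b * (infConv f ε z - ‖z‖^2/(2*ε))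
        + ‖a • x + b • z‖^2/(2*ε) ≤ infConv f ε (a • x + b • z) := le_csInf (hne ε _) hw
    linarith [h0]
  · -- (v) Lasry-Lions
    intro C hC hconv
    refine ⟨1/(4*C+1), by positivity, 2*C, by positivity, fun ε hε hε₀ => ?_⟩
    refine ⟨convex_univ, fun x _ z _ a b ha hb hab => ?_⟩
    rcases eq_or_lt_of_le ha with ha0 | ha'
    · rw [← ha0] at hab ⊢
      simp only [zero_smul, zero_add, smul_eq_mul, zero_mul] at hab ⊢
      rw [hab, one_smul, one_mul]
    rcases eq_or_lt_of_le hb with hb0 | hb'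
    · rw [← hb0] at hab ⊢
      simp only [zero_smul, add_zero, smul_eq_mul, zero_mul] at hab ⊢
      rw [hab, one_smul, one_mul]
    simp only [smul_eq_mul]
    refine le_of_forall_pos_le_add fun δ hδ => ?_
    obtain ⟨y₁, hy₁⟩ := happrox ε hε x δ hδ
    obtain ⟨y₂, hy₂⟩ := happrox ε hε z δ hδ
    set w := a • x + b • z with hwdef
    set y := a • y₁ + b • y₂ with hydef
    have h1 : infConv f ε w ≤ f y + ‖w - y‖ ^ 2 / (2 * ε) := hle ε hε w y
    -- convexity of f + C‖·‖²
    have h2 := hconv.2 (mem_univ y₁) (mem_univ y₂) ha hb hab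
    simp only [smul_eq_mul] at h2
    -- quadratic identities
    have e1 : w - y = a • (x - y₁) + b • (z - y₂) := by
      have hb1 : b = 1 - a := by linarith
      rw [hwdef, hydef, hb1]; module
    have e2 : (x - y₁) - (z - y₂) = (x - z) - (y₁ - y₂) := by abel
    have c1 : ‖w - y‖^2 = a * ‖x - y₁‖^2 + b * ‖z - y₂‖^2
        - a*b*‖(x - z) - (y₁ - y₂)‖^2 := by
      rw [e1, comb_sq a b hab, e2]
    have c2 : ‖w‖^2 = a * ‖x‖^2 + b * ‖z‖^2 - a*b*‖x - z‖^2 := comb_sq a b hab x z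
    have c3 : ‖y‖^2 = a * ‖y₁‖^2 + b * ‖y₂‖^2 - a*b*‖y₁ - y₂‖^2 := comb_sq a b hab y₁ y₂
    have hpsd := psd_vec ε C hε hC hε₀ (x - z) (y₁ - y₂)
    have hpsd' : a * b * (C * ‖y₁ - y₂‖^2)
        ≤ a * b * (‖(x - z) - (y₁ - y₂)‖^2/(2*ε) + 2*C*‖x - z‖^2) :=
      mul_le_mul_of_nonneg_left hpsd (by positivity)
    have hδ' : a * δ + b * δ = δ := by rw [← add_mul, hab, one_mul]
    rw [← hydef, c3] at h2
    rw [c1] at h1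
    rw [c2]
    have k1 := mul_le_mul_of_nonneg_left hy₁.le ha
    have k2 := mul_le_mul_of_nonneg_left hy₂.le hb
    ring_nf at k1 k2 h1 h2 hpsd' hδ' ⊢
    linarith [k1, k2, h1, h2, hpsd', hδ']

end
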